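/- Let A be a 3×3 real symmetric matrix, t ∈ ℝ, and suppose that the matrix B := A − (t/4)(tr A)·I satisfies σ₁(B) > 0 and σ₂(B) > 0. Then the positive-definiteness inequalities (3t−2)(tr A)·I < 6A < 3(2−t)(tr A)·I hold, i.e. both 6A − (3t−2)(tr A)·I and 3(2−t)(tr A)·I − 6A are positive definite. (Applied pointwise with A = Ric and tr A = R this yields the curvature pinching (3t−2)R·g < 6·Ric < 3(2−t)R·g of the main theorem from the condition Aᵗ = Ric − (t/4)R·g ∈ Γ₂⁺.) -/

import Mathlib

open Matrix

lemma gamma2_aux (a b c : ℝ) (h1 : 0 < a + b + c) (h2 : 0 < a*b + a*c + b*c) :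
    0 < b + c ∧ 0 < 4*a + b + c := by
  have hbc : 0 < b + c := by nlinarith [sq_nonneg (b - c), sq_nonneg (b + c), sq_nonneg (a+b+c)]
  exact ⟨hbc, by nlinarith [sq_nonneg (b - c)]⟩

lemma posDef_unitary_conj {n : Type*} [Fintype n] [DecidableEq n]
    {U D : Matrix n n ℝ} (hU : U ∈ Matrix.unitaryGroup n ℝ) (hD : D.PosDef) :
    (U * D * Uᴴ).PosDef := by
  have hUU : U * Uᴴ = 1 := Matrix.mem_unitaryGroup_iff.mp hU
  refine Matrix.PosDef.of_dotProduct_mulVec_pos (by simpa using Matrix.isHermitian_conjTranspose_mul_mul Uᴴ hD.1) fun x hx => ?_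
  have hx' : Uᴴ *ᵥ x ≠ 0 := by
    intro h
    apply hx
    have h2 := congrArg (fun v => U *ᵥ v) h
    simpa only [Matrix.mulVec_mulVec, hUU, Matrix.one_mulVec, Matrix.mulVec_zero] using h2
  have := hD.dotProduct_mulVec_pos hx'
  simpa only [star_mulVec, dotProduct_mulVec, vecMul_vecMul, conjTranspose_conjTranspose,
    Matrix.mul_assoc] using this

theorem pinching_from_gamma2 (A : Matrix (Fin 3) (Fin 3) ℝ) (hA : A.IsSymm) (t : ℝ)
    (h1 : 0 < Matrix.trace (A - (t / 4 * Matrix.trace A) • (1 : Matrix (Fin 3) (Fin 3) ℝ)))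
    (h2 : 0 < ((Matrix.trace (A - (t / 4 * Matrix.trace A) • (1 : Matrix (Fin 3) (Fin 3) ℝ))) ^ 2
        - Matrix.trace ((A - (t / 4 * Matrix.trace A) • (1 : Matrix (Fin 3) (Fin 3) ℝ))
          * (A - (t / 4 * Matrix.trace A) • (1 : Matrix (Fin 3) (Fin 3) ℝ)))) / 2) :
    ((6 : ℝ) • A - ((3 * t - 2) * Matrix.trace A) • (1 : Matrix (Fin 3) (Fin 3) ℝ)).PosDef ∧
    ((3 * (2 - t) * Matrix.trace A) • (1 : Matrix (Fin 3) (Fin 3) ℝ) - (6 : ℝ) • A).PosDef := by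
  set B : Matrix (Fin 3) (Fin 3) ℝ := A - (t / 4 * Matrix.trace A) • 1 with hBdef
  have hB : B.IsHermitian := by
    show Bᴴ = B
    rw [Matrix.conjTranspose_eq_transpose_of_trivial, hBdef, Matrix.transpose_sub,
      Matrix.transpose_smul, Matrix.transpose_one, hA.eq]
  set U : Matrix (Fin 3) (Fin 3) ℝ := (hB.eigenvectorUnitary : Matrix (Fin 3) (Fin 3) ℝ) with hU
  set μ : Fin 3 → ℝ := hB.eigenvalues with hμ
  have hUmem : U ∈ Matrix.unitaryGroup (Fin 3) ℝ := hB.eigenvectorUnitary.2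
  have hUU : star U * U = 1 := Matrix.mem_unitaryGroup_iff'.mp hUmem
  have hUU' : U * Uᴴ = 1 := Matrix.mem_unitaryGroup_iff.mp hUmem
  have hspec : B = U * Matrix.diagonal μ * star U := by
    have := hB.spectral_theorem
    rwa [RCLike.ofReal_real_eq_id, Function.id_comp] at this
  -- trace identities
  have htr : Matrix.trace B = μ 0 + μ 1 + μ 2 := by
    rw [hspec, Matrix.trace_mul_cycle, hUU, Matrix.one_mul,
      Matrix.trace_diagonal, Fin.sum_univ_three]
  have htr2 : Matrix.trace (B * B) = μ 0 ^ 2 + μ 1 ^ 2 + μ 2 ^ 2 := by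
    have key : (U * Matrix.diagonal μ * star U) * (U * Matrix.diagonal μ * star U)
        = U * (Matrix.diagonal μ * Matrix.diagonal μ) * star U := by
      have hmid : star U * (U * (Matrix.diagonal μ * star U)) = Matrix.diagonal μ * star U := by
        rw [← Matrix.mul_assoc, hUU, Matrix.one_mul]
      simp only [Matrix.mul_assoc]
      rw [hmid]
    rw [hspec, key, Matrix.trace_mul_cycle, hUU, Matrix.one_mul,
      Matrix.diagonal_mul_diagonal, Matrix.trace_diagonal, Fin.sum_univ_three]
    ring
  rw [htr] at h1
  rw [htr, htr2] at h2
  -- eigenvalue inequalities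
  have h2' : 0 < μ 0 * μ 1 + μ 0 * μ 2 + μ 1 * μ 2 := by nlinarith
  have g0 := gamma2_aux (μ 0) (μ 1) (μ 2) (by linarith) (by nlinarith)
  have g1 := gamma2_aux (μ 1) (μ 0) (μ 2) (by linarith) (by nlinarith)
  have g2 := gamma2_aux (μ 2) (μ 0) (μ 1) (by linarith) (by nlinarith)
  -- representation of shifted matrices
  have hspec' : B = U * Matrix.diagonal μ * Uᴴ := by
    rw [hspec, Matrix.star_eq_conjTranspose]
  have key : ∀ r d : ℝ, r • B + d • (1 : Matrix (Fin 3) (Fin 3) ℝ)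
      = U * Matrix.diagonal (fun i => r * μ i + d) * Uᴴ := by
    intro r d
    have hdiag : Matrix.diagonal (fun i : Fin 3 => r * μ i + d)
        = r • Matrix.diagonal μ + d • (1 : Matrix (Fin 3) (Fin 3) ℝ) := by
      ext i j
      rcases eq_or_ne i j with rfl | h
      · simp
      · simp [Matrix.diagonal_apply_ne _ h, Matrix.one_apply_ne h]
    rw [hdiag, Matrix.mul_add, Matrix.add_mul, Matrix.mul_smul, Matrix.smul_mul, ← hspec',
      Matrix.mul_smul, Matrix.mul_one, Matrix.smul_mul, hUU']
  -- trace of B in terms of trace of A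
  have htrBs : μ 0 + μ 1 + μ 2 = Matrix.trace A - t / 4 * Matrix.trace A * 3 := by
    rw [← htr, hBdef, Matrix.trace_sub, Matrix.trace_smul, Matrix.trace_one]
    simp [smul_eq_mul]
  constructor
  · have e1 : (6 : ℝ) • A - ((3 * t - 2) * Matrix.trace A) • (1 : Matrix (Fin 3) (Fin 3) ℝ)
        = (6 : ℝ) • B + (2 * (μ 0 + μ 1 + μ 2)) • 1 := by
      rw [htrBs, hBdef]
      ext i j
      rcases eq_or_ne i j with rfl | h
      · simp; ring
      · simp [Matrix.one_apply_ne h]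
    rw [e1, key]
    refine posDef_unitary_conj hUmem (Matrix.posDef_diagonal_iff.mpr fun i => ?_)
    match i with
    | 0 => show (0:ℝ) < 6 * μ 0 + 2 * (μ 0 + μ 1 + μ 2); linarith [g0.2]
    | 1 => show (0:ℝ) < 6 * μ 1 + 2 * (μ 0 + μ 1 + μ 2); linarith [g1.2]
    | 2 => show (0:ℝ) < 6 * μ 2 + 2 * (μ 0 + μ 1 + μ 2); linarith [g2.2]
  · have e2 : (3 * (2 - t) * Matrix.trace A) • (1 : Matrix (Fin 3) (Fin 3) ℝ) - (6 : ℝ) • A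
        = (-6 : ℝ) • B + (6 * (μ 0 + μ 1 + μ 2)) • 1 := by
      rw [htrBs, hBdef]
      ext i j
      rcases eq_or_ne i j with rfl | h
      · simp; ring
      · simp [Matrix.one_apply_ne h]
    rw [e2, key]
    refine posDef_unitary_conj hUmem (Matrix.posDef_diagonal_iff.mpr fun i => ?_)
    match i with
    | 0 => show (0:ℝ) < -6 * μ 0 + 6 * (μ 0 + μ 1 + μ 2); linarith [g0.1]
    | 1 => show (0:ℝ) < -6 * μ 1 + 6 * (μ 0 + μ 1 + μ 2); linarith [g1.1]
    | 2 => show (0:ℝ) < -6 * μ 2 + 6 * (μ 0 + μ 1 + μ 2); linarith [g2.1]
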